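/- arXiv:2307.10026 — 2 statements merged into one kernel-verified Lean document; each statement's English description precedes it below -/
import Mathlib

section
/- The predictor w* = (1/(‖μ‖₂·√(1+γ²)))·[γμ, μ, 0_d] ∈ ℝ^{3d} satisfies Acc_{P_{c2}}(w*) = 0.5·erfc(−ρ1·(γ−1)/√(γ² + 1/γ)); in particular, when 0 < γ < 1 this accuracy is strictly below 1/2 (worse than random). -/
open MeasureTheory ProbabilityTheory Real Filter
open scoped ENNReal NNReal

noncomputable section

/-- Complementary error function `erfc x = (2/√π) ∫_x^∞ e^{−t²} dt`. -/
def erfc (x : ℝ) : ℝ := 2 / Real.sqrt Real.pi * ∫ t in Set.Ioi x, Real.exp (-t ^ 2)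

/-- A vector in `ℝ^d`. -/
abbrev Vec (d : ℕ) := Fin d → ℝ

/-- The input space `ℝ^{3d}`, viewed as three blocks `x = [x1, x2, x3]`. -/
abbrev Inp (d : ℕ) := Vec d × Vec d × Vec d

/-- Euclidean dot product on `ℝ^d`. -/
def dot {d : ℕ} (v w : Vec d) : ℝ := ∑ i, v i * w i

/-- Euclidean norm on `ℝ^d`. -/
def vnorm {d : ℕ} (v : Vec d) : ℝ := Real.sqrt (∑ i, v i ^ 2)

/-- Euclidean norm on the full input space `ℝ^{3d}`. -/
def xnorm {d : ℕ} (x : Inp d) : ℝ :=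
  Real.sqrt ((∑ i, x.1 i ^ 2) + (∑ i, x.2.1 i ^ 2) + ∑ i, x.2.2 i ^ 2)

/-- Value `wᵀx` of the linear predictor `w` at input `x`. -/
def pred {d : ℕ} (w x : Inp d) : ℝ := dot w.1 x.1 + dot w.2.1 x.2.1 + dot w.2.2 x.2.2

/-- Isotropic Gaussian `N(m, v·I_d)` on `ℝ^d` (product of coordinate Gaussians). -/
def gaussVec (d : ℕ) (m : Vec d) (v : ℝ) : Measure (Vec d) :=
  Measure.pi fun i => gaussianReal (m i) (Real.toNNReal v)

/-- Conditional law of `x` given the label `y` in context `c1`: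
`x1 ~ N(μy, σ²I)`, `x2 ~ N(μy, γσ²I)`, `x3 ~ N(μ, η²I)`, independent blocks. -/
def condX1 (d : ℕ) (μ : Vec d) (σ γ η : ℝ) (y : ℝ) : Measure (Inp d) :=
  (gaussVec d (fun i => μ i * y) (σ ^ 2)).prod
    ((gaussVec d (fun i => μ i * y) (γ * σ ^ 2)).prod
      (gaussVec d μ (η ^ 2)))

/-- Conditional law of `x` given the label `y` in context `c2`:
`x1 ~ N(μy, σ²I)`, `x2 ~ N(−μy, (σ²/γ)I)`, `x3 ~ N(−μ, η²I)`, independent blocks. -/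
def condX2 (d : ℕ) (μ : Vec d) (σ γ η : ℝ) (y : ℝ) : Measure (Inp d) :=
  (gaussVec d (fun i => μ i * y) (σ ^ 2)).prod
    ((gaussVec d (fun i => -μ i * y) (σ ^ 2 / γ)).prod
      (gaussVec d (fun i => -μ i) (η ^ 2)))

/-- Joint law of `(x, y)`: `y` uniform on `{−1, 1}`, then `x ~ cond y`. -/
def jointOf {d : ℕ} (cond : ℝ → Measure (Inp d)) : Measure (Inp d × ℝ) :=
  (2 : ℝ≥0∞)⁻¹ • (cond 1).prod (Measure.dirac (1 : ℝ))
    + (2 : ℝ≥0∞)⁻¹ • (cond (-1)).prod (Measure.dirac (-1 : ℝ))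

/-- The context-`c1` distribution over `(x, y)`. -/
def Pc1 (d : ℕ) (μ : Vec d) (σ γ η : ℝ) : Measure (Inp d × ℝ) :=
  jointOf (condX1 d μ σ γ η)

/-- The context-`c2` distribution over `(x, y)`. -/
def Pc2 (d : ℕ) (μ : Vec d) (σ γ η : ℝ) : Measure (Inp d × ℝ) :=
  jointOf (condX2 d μ σ γ η)

/-- Accuracy `Acc_P(w) = P(sign(wᵀx) = y)` of linear predictor `w` under joint law `P`. -/
def AccP {d : ℕ} (P : Measure (Inp d × ℝ)) (w : Inp d) : ℝ :=
  (P {p | Real.sign (pred w p.1) = p.2}).toReal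

/-- Norm-bounded linear predictors `W1 = {w ∈ ℝ^{3d} : ‖w‖₂ ≤ 1}`. -/
def W1 (d : ℕ) : Set (Inp d) := {w | xnorm w ≤ 1}

/-- Population exponential loss `E_P[exp(−y·wᵀx)]`. -/
def expLoss {d : ℕ} (P : Measure (Inp d × ℝ)) (w : Inp d) : ℝ :=
  ∫ p, Real.exp (-(p.2 * pred w p.1)) ∂P

end


namespace C1C2Aux

open MeasureTheory ProbabilityTheory Real Set
open scoped ENNReal NNReal

noncomputable section

lemma pdf_le (m : ℝ) (v : ℝ≥0) (t : ℝ) : gaussianPDFReal m v t ≤ (√(2 * π * v))⁻¹ := by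
  rw [gaussianPDFReal]
  have : rexp (-(t - m) ^ 2 / (2 * v)) ≤ 1 := by
    rw [Real.exp_le_one_iff]
    exact div_nonpos_of_nonpos_of_nonneg (neg_nonpos.mpr (sq_nonneg _)) (by positivity)
  calc (√(2 * π * v))⁻¹ * rexp (-(t - m) ^ 2 / (2 * v)) ≤ (√(2 * π * v))⁻¹ * 1 :=
        mul_le_mul_of_nonneg_left this (by positivity)
    _ = _ := mul_one _

lemma integrable_pdf_mul (m1 m2 : ℝ) (v1 v2 : ℝ≥0) (z : ℝ) :
    Integrable (fun x => gaussianPDFReal m1 v1 x * gaussianPDFReal m2 v2 (z - x)) := by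
  apply Integrable.mono' ((integrable_gaussianPDFReal m1 v1).const_mul ((√(2 * π * v2))⁻¹))
  · exact ((measurable_gaussianPDFReal m1 v1).mul
      ((measurable_gaussianPDFReal m2 v2).comp
        (measurable_const.sub measurable_id))).aestronglyMeasurable
  · refine Filter.Eventually.of_forall fun x => ?_
    rw [Real.norm_eq_abs, abs_of_nonneg (mul_nonneg (gaussianPDFReal_nonneg _ _ _)
      (gaussianPDFReal_nonneg _ _ _)), mul_comm ((√(2 * π * v2))⁻¹)]
    exact mul_le_mul_of_nonneg_left (pdf_le _ _ _) (gaussianPDFReal_nonneg _ _ _)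

lemma pdf_mul (m1 m2 : ℝ) (v1 v2 : ℝ≥0) (h1 : v1 ≠ 0) (h2 : v2 ≠ 0) (z x : ℝ) :
    gaussianPDFReal m1 v1 x * gaussianPDFReal m2 v2 (z - x)
      = gaussianPDFReal (m1 + m2) (v1 + v2) z *
        gaussianPDFReal (m1 + v1 * (z - m1 - m2) / (v1 + v2)) (v1 * v2 / (v1 + v2)) x := by
  have h12 : (v1 : ℝ) + v2 ≠ 0 := by positivity
  have hv1 : (0:ℝ) < v1 := lt_of_le_of_ne v1.coe_nonneg (by exact_mod_cast (Ne.symm h1))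
  have hv2 : (0:ℝ) < v2 := lt_of_le_of_ne v2.coe_nonneg (by exact_mod_cast (Ne.symm h2))
  have hc : ((v1 * v2 / (v1 + v2) : ℝ≥0) : ℝ) = (v1:ℝ) * v2 / ((v1:ℝ) + v2) := by
    push_cast [NNReal.coe_div]
    ring
  simp only [gaussianPDFReal, NNReal.coe_add, hc]
  rw [mul_mul_mul_comm, mul_mul_mul_comm ((√(2 * π * ((v1:ℝ) + v2)))⁻¹)]
  congr 1
  · rw [← mul_inv, ← mul_inv, ← Real.sqrt_mul (by positivity), ← Real.sqrt_mul (by positivity)]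
    congr 1
    field_simp
  · rw [← Real.exp_add, ← Real.exp_add]
    congr 1
    field_simp
    ring

lemma conv_integral (m1 m2 : ℝ) (v1 v2 : ℝ≥0) (h1 : v1 ≠ 0) (h2 : v2 ≠ 0) (z : ℝ) :
    ∫ x, gaussianPDFReal m1 v1 x * gaussianPDFReal m2 v2 (z - x)
      = gaussianPDFReal (m1 + m2) (v1 + v2) z := by
  have hv' : v1 * v2 / (v1 + v2) ≠ 0 := by
    refine div_ne_zero (mul_ne_zero h1 h2) ?_
    simp [h1]
  simp_rw [pdf_mul m1 m2 v1 v2 h1 h2 z]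
  rw [integral_const_mul, integral_gaussianPDFReal_eq_one _ hv', mul_one]

lemma gauss_conv (m1 m2 : ℝ) (v1 v2 : ℝ≥0) :
    ((gaussianReal m1 v1).prod (gaussianReal m2 v2)).map (fun p : ℝ × ℝ => p.1 + p.2)
      = gaussianReal (m1 + m2) (v1 + v2) := by
  by_cases h1 : v1 = 0
  · subst h1
    rw [gaussianReal_zero_var, Measure.dirac_prod, Measure.map_map (by fun_prop) (by fun_prop)]
    have : ((fun p : ℝ × ℝ => p.1 + p.2) ∘ fun y => (m1, y)) = fun y => m1 + y := rfl
    rw [this, gaussianReal_map_const_add, add_comm m2 m1, zero_add]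
  by_cases h2 : v2 = 0
  · subst h2
    rw [gaussianReal_zero_var, Measure.prod_dirac, Measure.map_map (by fun_prop) (by fun_prop)]
    have : ((fun p : ℝ × ℝ => p.1 + p.2) ∘ fun x => (x, m2)) = fun x => x + m2 := rfl
    rw [this, gaussianReal_map_add_const, add_zero]
  have hmeas : Measurable fun q : ℝ × ℝ => gaussianPDF (q.1 + m2) v2 q.2 := by
    apply Measurable.ennreal_ofReal
    unfold gaussianPDFReal
    fun_prop
  ext s hs
  rw [Measure.map_apply (by fun_prop) hs]
  rw [gaussianReal_of_var_ne_zero _ h2, Measure.prod_apply (hs.preimage (by fun_prop))]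
  have step1 : ∀ x : ℝ, (volume.withDensity (gaussianPDF m2 v2))
        (Prod.mk x ⁻¹' ((fun p : ℝ × ℝ => p.1 + p.2) ⁻¹' s))
      = ∫⁻ z in s, gaussianPDF (x + m2) v2 z := by
    intro x
    have : Prod.mk x ⁻¹' ((fun p : ℝ × ℝ => p.1 + p.2) ⁻¹' s) = (fun y => x + y) ⁻¹' s := rfl
    rw [this, ← gaussianReal_of_var_ne_zero _ h2,
      ← Measure.map_apply (by fun_prop) hs, gaussianReal_map_const_add, add_comm m2 x,
      gaussianReal_of_var_ne_zero _ h2, withDensity_apply _ hs]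
  simp_rw [step1]
  have hmeas2 : Measurable fun x => ∫⁻ z in s, gaussianPDF (x + m2) v2 z :=
    Measurable.lintegral_prod_right' (ν := volume.restrict s) hmeas
  rw [gaussianReal_of_var_ne_zero _ h1,
    lintegral_withDensity_eq_lintegral_mul _ (measurable_gaussianPDF _ _) hmeas2]
  simp only [Pi.mul_apply]
  have hmeasu : Measurable fun q : ℝ × ℝ => gaussianPDF m1 v1 q.1 * gaussianPDF (q.1 + m2) v2 q.2 :=
    ((measurable_gaussianPDF m1 v1).comp measurable_fst).mul hmeas
  have swap1 : ∫⁻ x, gaussianPDF m1 v1 x * ∫⁻ z in s, gaussianPDF (x + m2) v2 z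
      = ∫⁻ z in s, ∫⁻ x, gaussianPDF m1 v1 x * gaussianPDF (x + m2) v2 z := by
    have : ∀ x : ℝ, gaussianPDF m1 v1 x * ∫⁻ z in s, gaussianPDF (x + m2) v2 z
        = ∫⁻ z in s, gaussianPDF m1 v1 x * gaussianPDF (x + m2) v2 z := fun x =>
      (lintegral_const_mul _ (by exact (measurable_gaussianPDF (x + m2) v2))).symm
    simp_rw [this]
    exact lintegral_lintegral_swap hmeasu.aemeasurable
  rw [swap1]
  have inner : ∀ z : ℝ, (∫⁻ x, gaussianPDF m1 v1 x * gaussianPDF (x + m2) v2 z)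
      = gaussianPDF (m1 + m2) (v1 + v2) z := by
    intro z
    have e1 : ∀ x : ℝ, gaussianPDF m1 v1 x * gaussianPDF (x + m2) v2 z
        = ENNReal.ofReal (gaussianPDFReal m1 v1 x * gaussianPDFReal m2 v2 (z - x)) := by
      intro x
      rw [gaussianPDF, gaussianPDF, ← ENNReal.ofReal_mul (gaussianPDFReal_nonneg _ _ _)]
      congr 2
      rw [gaussianPDFReal_sub, add_comm]
    simp_rw [e1]
    rw [← ofReal_integral_eq_lintegral_ofReal (integrable_pdf_mul m1 m2 v1 v2 z)
      (Filter.Eventually.of_forall fun x => mul_nonneg (gaussianPDFReal_nonneg _ _ _)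
        (gaussianPDFReal_nonneg _ _ _)),
      conv_integral m1 m2 v1 v2 h1 h2 z]
    rfl
  simp_rw [inner]
  rw [gaussianReal_of_var_ne_zero _ (by simp [h1]), withDensity_apply _ hs]

lemma mk_sq_eq (c : ℝ) : NNReal.mk (c^2) (sq_nonneg c) = (c^2).toNNReal := by
  ext; simp [Real.coe_toNNReal _ (sq_nonneg c)]

lemma pi_gauss_map : ∀ (n : ℕ) (a m : Fin n → ℝ) (v : Fin n → ℝ≥0),
    (Measure.pi fun i => gaussianReal (m i) (v i)).map (fun x => ∑ i, a i * x i)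
      = gaussianReal (∑ i, a i * m i) (∑ i, ((a i)^2).toNNReal * v i) := by
  intro n
  induction n with
  | zero =>
      intro a m v
      simp only [Finset.univ_eq_empty, Finset.sum_empty]
      rw [Measure.map_const, measure_univ, one_smul, gaussianReal_zero_var]
  | succ n ih =>
      intro a m v
      have hmp := measurePreserving_piFinSuccAbove (fun i => gaussianReal (m i) (v i)) 0
      set e := MeasurableEquiv.piFinSuccAbove (fun _ : Fin (n+1) => ℝ) 0
      have hcomp : (fun x : Fin (n+1) → ℝ => ∑ i, a i * x i)
          = (fun p : ℝ × (Fin n → ℝ) => a 0 * p.1 + ∑ j, a j.succ * p.2 j) ∘ e := by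
        funext x
        simp only [Function.comp_apply, e, MeasurableEquiv.piFinSuccAbove_apply]
        rw [Fin.sum_univ_succ]
        simp [Fin.succAbove_zero, Fin.tail]
      rw [hcomp, ← Measure.map_map (by fun_prop) (by fun_prop), hmp.map_eq]
      have hsplit : (fun p : ℝ × (Fin n → ℝ) => a 0 * p.1 + ∑ j, a j.succ * p.2 j)
          = (fun q : ℝ × ℝ => q.1 + q.2) ∘
              (Prod.map (fun t => a 0 * t) (fun y : Fin n → ℝ => ∑ j, a j.succ * y j)) := rfl
      rw [hsplit, ← Measure.map_map (by fun_prop) (by fun_prop),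
        ← Measure.map_prod_map _ _ (by fun_prop) (by fun_prop),
        gaussianReal_map_const_mul,
        ih (fun j => a j.succ) (fun j => m (Fin.succAbove 0 j)) (fun j => v (Fin.succAbove 0 j)),
        gauss_conv, mk_sq_eq, Fin.sum_univ_succ (f := fun i => a i * m i),
        Fin.sum_univ_succ (f := fun i => ((a i)^2).toNNReal * v i)]
      simp [Fin.succAbove_zero]

lemma std_tail (a : ℝ) : ((gaussianReal 0 1 (Set.Ioi a)).toReal) = 0.5 * erfc (a / √2) := by
  rw [gaussianReal_apply_eq_integral 0 one_ne_zero,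
    ENNReal.toReal_ofReal (setIntegral_nonneg measurableSet_Ioi
      (fun x _ => gaussianPDFReal_nonneg _ _ _))]
  unfold gaussianPDFReal erfc
  push_cast
  simp only [sub_zero, mul_one]
  rw [integral_const_mul]
  have hsub := integral_comp_mul_left_Ioi (fun x => rexp (-x^2 / 2)) (a / √2)
    (by positivity : (0:ℝ) < √2)
  have h2 : (√2 : ℝ) * (a / √2) = a := by field_simp
  have h3 : ∀ x : ℝ, rexp (-(√2 * x)^2 / 2) = rexp (-x^2) := by
    intro x
    congr 1
    rw [mul_pow, Real.sq_sqrt (by norm_num : (0:ℝ) ≤ 2)]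
    ring
  rw [h2] at hsub
  simp_rw [h3] at hsub
  rw [smul_eq_mul] at hsub
  have hint : (∫ x in Ioi a, rexp (-x^2 / 2)) = √2 * ∫ t in Ioi (a / √2), rexp (-t^2) := by
    rw [hsub, ← mul_assoc, mul_inv_cancel₀ (by positivity), one_mul]
  rw [hint]
  have hpi : (√(2 * π))⁻¹ * √2 = (√π)⁻¹ := by
    rw [Real.sqrt_mul (by norm_num : (0:ℝ) ≤ 2)]
    field_simp
  calc (√(2 * π))⁻¹ * (√2 * ∫ t in Ioi (a / √2), rexp (-t^2))
      = ((√(2 * π))⁻¹ * √2) * ∫ t in Ioi (a / √2), rexp (-t^2) := by ring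
    _ = 0.5 * (2 / √π * ∫ t in Ioi (a / √2), rexp (-t ^ 2)) := by
        rw [hpi]; ring

lemma gauss_tail (m : ℝ) {v : ℝ≥0} (hv : v ≠ 0) :
    ((gaussianReal m v (Set.Ioi 0)).toReal) = 0.5 * erfc (-(m / Real.sqrt (2 * v))) := by
  have hvpos : (0:ℝ) < v := lt_of_le_of_ne v.coe_nonneg (by exact_mod_cast (Ne.symm hv))
  set c : ℝ := Real.sqrt v with hc
  have hcpos : 0 < c := Real.sqrt_pos.mpr hvpos
  have hmap : (gaussianReal 0 1).map (fun t => c * t + m) = gaussianReal m v := by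
    have h1 : (fun t : ℝ => c * t + m) = (· + m) ∘ (c * ·) := rfl
    rw [h1, ← Measure.map_map (by fun_prop) (by fun_prop), gaussianReal_map_const_mul,
      gaussianReal_map_add_const]
    congr 1
    · ring
    · ext
      push_cast
      rw [Real.sq_sqrt hvpos.le]
      ring
  rw [← hmap, Measure.map_apply (by fun_prop) measurableSet_Ioi]
  have hpre : (fun t : ℝ => c * t + m) ⁻¹' Ioi 0 = Ioi (-m / c) := by
    ext t
    simp only [mem_preimage, mem_Ioi]
    rw [div_lt_iff₀ hcpos]
    constructor <;> intro h <;> nlinarith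
  rw [hpre, std_tail]
  congr 2
  rw [Real.sqrt_mul (by norm_num : (0:ℝ) ≤ 2)]
  rw [hc]
  ring

lemma integrable_gsq : Integrable (fun t : ℝ => rexp (-t ^ 2)) := by
  have := integrable_exp_neg_mul_sq (by norm_num : (0:ℝ) < 1)
  simpa using this

lemma erfc_zero : erfc 0 = 1 := by
  unfold erfc
  have h : ∫ t in Ioi (0:ℝ), rexp (-t ^ 2) = √(π / 1) / 2 := by
    rw [← integral_gaussian_Ioi 1]
    norm_num
  rw [h, div_one, div_mul_eq_mul_div, mul_div_assoc]
  field_simp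

lemma erfc_lt_one {z : ℝ} (hz : 0 < z) : erfc z < 1 := by
  have hsplit : (∫ t in Ioi (0:ℝ), rexp (-t ^ 2))
      = (∫ t in Ioc 0 z, rexp (-t ^ 2)) + ∫ t in Ioi z, rexp (-t ^ 2) := by
    rw [← setIntegral_union (Ioc_disjoint_Ioi le_rfl) measurableSet_Ioi
      integrable_gsq.integrableOn integrable_gsq.integrableOn, Ioc_union_Ioi_eq_Ioi hz.le]
  have hpos : 0 < ∫ t in Ioc (0:ℝ) z, rexp (-t ^ 2) := by
    rw [setIntegral_pos_iff_support_of_nonneg_ae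
      (Filter.Eventually.of_forall fun t => (Real.exp_pos _).le)
      integrable_gsq.integrableOn]
    have hsupp : Function.support (fun t : ℝ => rexp (-t ^ 2)) = univ := by
      ext t; simp [Function.support, (Real.exp_pos _).ne']
    rw [hsupp, univ_inter]
    simp [Real.volume_Ioc, hz]
  have h1 : erfc z = 1 - 2 / √π * ∫ t in Ioc 0 z, rexp (-t ^ 2) := by
    rw [← erfc_zero]
    unfold erfc
    rw [hsplit]
    ring
  rw [h1]
  have h2 : 0 < 2 / √π * ∫ t in Ioc 0 z, rexp (-t ^ 2) :=
    mul_pos (by positivity) hpos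
  linarith

lemma neg_tail (m : ℝ) (v : ℝ≥0) :
    gaussianReal (-m) v (Set.Iio 0) = gaussianReal m v (Set.Ioi 0) := by
  have hmap : (gaussianReal (-m) v).map ((-1 : ℝ) * ·) = gaussianReal m v := by
    rw [gaussianReal_map_const_mul, mk_sq_eq]
    norm_num
  rw [← hmap, Measure.map_apply (by fun_prop) measurableSet_Ioi,
    preimage_const_mul_Ioi_of_neg _ (by norm_num : (-1:ℝ) < 0)]
  norm_num

lemma meas_lin {d : ℕ} (c : Fin d → ℝ) : Measurable fun a : Vec d => ∑ i, c i * a i :=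
  Finset.measurable_sum _ fun i _ => by fun_prop

lemma measurable_rsign : Measurable Real.sign := by
  unfold Real.sign
  exact Measurable.ite (measurableSet_lt measurable_id measurable_const) measurable_const
    (Measurable.ite (measurableSet_lt measurable_const measurable_id)
      measurable_const measurable_const)

lemma sign_pos_mul {c : ℝ} (hc : 0 < c) (t : ℝ) : Real.sign (c * t) = Real.sign t := by
  rcases lt_trichotomy t 0 with h | h | h
  · rw [Real.sign_of_neg h, Real.sign_of_neg (mul_neg_of_pos_of_neg hc h)]
  · simp [h, Real.sign_zero]
  · rw [Real.sign_of_pos h, Real.sign_of_pos (mul_pos hc h)]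

lemma sign_eq_one_iff (t : ℝ) : Real.sign t = 1 ↔ 0 < t := by
  constructor
  · intro h
    rcases lt_trichotomy t 0 with h' | h' | h'
    · rw [Real.sign_of_neg h'] at h; norm_num at h
    · simp [h', Real.sign_zero] at h
    · exact h'
  · exact fun h => Real.sign_of_pos h

lemma sign_eq_neg_one_iff (t : ℝ) : Real.sign t = -1 ↔ t < 0 := by
  constructor
  · intro h
    rcases lt_trichotomy t 0 with h' | h' | h'
    · exact h'
    · simp [h', Real.sign_zero] at h
    · rw [Real.sign_of_pos h'] at h; norm_num at h
  · exact fun h => Real.sign_of_neg h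

instance gaussVec_prob (d : ℕ) (m : Vec d) (v : ℝ) : IsProbabilityMeasure (gaussVec d m v) := by
  unfold gaussVec
  infer_instance

instance condX2_prob (d : ℕ) (μ : Vec d) (σ γ η y : ℝ) :
    IsProbabilityMeasure (condX2 d μ σ γ η y) := by
  unfold condX2
  infer_instance

end

end C1C2Aux

theorem c1_optimal_accuracy_on_c2 (d : ℕ) (hd : 1 ≤ d) (μ : Vec d) (hμ : μ ≠ 0)
    (σ γ η : ℝ) (hσ : 0 < σ) (hγ : 0 < γ) (hη : 0 < η) :
    AccP (Pc2 d μ σ γ η)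
        ((1 / (vnorm μ * Real.sqrt (1 + γ ^ 2))) • ((γ • μ, μ, (0 : Vec d)) : Inp d))
      = 0.5 * erfc (-((vnorm μ / (Real.sqrt 2 * σ)) * (γ - 1) / Real.sqrt (γ ^ 2 + 1 / γ))) ∧
    (γ < 1 →
      AccP (Pc2 d μ σ γ η)
          ((1 / (vnorm μ * Real.sqrt (1 + γ ^ 2))) • ((γ • μ, μ, (0 : Vec d)) : Inp d))
        < 1 / 2) := by
  classical
  have hSpos : 0 < ∑ i, μ i ^ 2 := by
    rcases Function.ne_iff.mp hμ with ⟨i, hi⟩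
    exact Finset.sum_pos' (fun j _ => sq_nonneg _)
      ⟨i, Finset.mem_univ i, by
        rcases (sq_nonneg (μ i)).lt_or_eq with h | h
        · exact h
        · exact absurd ((pow_eq_zero_iff (by norm_num)).mp h.symm) hi⟩
  set S : ℝ := ∑ i, μ i ^ 2 with hSdef
  set cst : ℝ := 1 / (vnorm μ * Real.sqrt (1 + γ ^ 2)) with hcst
  have hvn : 0 < vnorm μ := Real.sqrt_pos.mpr hSpos
  have hcstpos : 0 < cst := by
    rw [hcst]
    exact one_div_pos.mpr (mul_pos hvn (Real.sqrt_pos.mpr (by positivity)))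
  set w : Inp d := cst • ((γ • μ, μ, (0 : Vec d)) : Inp d) with hw
  set f : Inp d → ℝ := fun x => (∑ i, (γ * μ i) * x.1 i) + ∑ i, μ i * x.2.1 i with hf
  have hfmeas : Measurable f := by
    apply Measurable.add
    · exact (C1C2Aux.meas_lin (fun i => γ * μ i)).comp measurable_fst
    · exact (C1C2Aux.meas_lin μ).comp (measurable_fst.comp measurable_snd)
  have hpred : ∀ x : Inp d, pred w x = cst * f x := by
    intro x
    simp only [pred, dot, hw, hf, Prod.smul_fst, Prod.smul_snd, Pi.smul_apply, smul_eq_mul,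
      Prod.fst, Prod.snd]
    rw [mul_add, Finset.mul_sum, Finset.mul_sum]
    have h3 : ∑ i, cst * (0 : Vec d) i * x.2.2 i = 0 := by simp
    rw [h3, add_zero]
    congr 1
    · exact Finset.sum_congr rfl fun i _ => by ring
    · exact Finset.sum_congr rfl fun i _ => by ring
  have hsign : ∀ x : Inp d, Real.sign (pred w x) = Real.sign (f x) := fun x => by
    rw [hpred x, C1C2Aux.sign_pos_mul hcstpos]
  -- the law of f under condX2
  have hQpos : 0 < γ ^ 2 + 1 / γ := by positivity
  have hVpos : 0 < S * σ ^ 2 * (γ ^ 2 + 1 / γ) := by positivity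
  have hVnn : (S * σ ^ 2 * (γ ^ 2 + 1 / γ)).toNNReal ≠ 0 := by
    simp only [ne_eq, Real.toNNReal_eq_zero, not_le]
    exact hVpos
  have hlaw : ∀ y : ℝ, (condX2 d μ σ γ η y).map f
      = gaussianReal (y * (γ - 1) * S) ((S * σ ^ 2 * (γ ^ 2 + 1 / γ)).toNNReal) := by
    intro y
    have hg1 : Measurable fun a : Vec d => ∑ i, (γ * μ i) * a i := C1C2Aux.meas_lin _
    have hg2 : Measurable fun a : Vec d => ∑ i, μ i * a i := C1C2Aux.meas_lin _
    have hfc : f = (fun q : ℝ × ℝ => q.1 + q.2) ∘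
        (Prod.map (fun a : Vec d => ∑ i, (γ * μ i) * a i)
          ((fun a : Vec d => ∑ i, μ i * a i) ∘ Prod.fst)) := rfl
    rw [hfc, condX2, ← Measure.map_map (by fun_prop) ((Measurable.prodMap hg1 (hg2.comp measurable_fst))),
      ← Measure.map_prod_map _ _ hg1 (hg2.comp measurable_fst),
      ← Measure.map_map hg2 measurable_fst, Measure.map_fst_prod, measure_univ, one_smul]
    unfold gaussVec
    rw [C1C2Aux.pi_gauss_map d (fun i => γ * μ i) (fun i => μ i * y) (fun _ => (σ ^ 2).toNNReal),
      C1C2Aux.pi_gauss_map d μ (fun i => -μ i * y) (fun _ => (σ ^ 2 / γ).toNNReal),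
      C1C2Aux.gauss_conv]
    congr 1
    · rw [← Finset.sum_add_distrib, hSdef, Finset.mul_sum]
      exact Finset.sum_congr rfl fun i _ => by ring
    · have e1 : (∑ i, ((γ * μ i) ^ 2).toNNReal * (σ ^ 2).toNNReal)
          + ∑ i, ((μ i) ^ 2).toNNReal * (σ ^ 2 / γ).toNNReal
          = (S * σ ^ 2 * (γ ^ 2 + 1 / γ)).toNNReal := by
        have c1 : ∀ i : Fin d, ((γ * μ i) ^ 2).toNNReal * (σ ^ 2).toNNReal
            = ((γ * μ i) ^ 2 * σ ^ 2).toNNReal := fun i =>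
          (Real.toNNReal_mul (sq_nonneg _)).symm
        have c2 : ∀ i : Fin d, ((μ i) ^ 2).toNNReal * (σ ^ 2 / γ).toNNReal
            = (μ i ^ 2 * (σ ^ 2 / γ)).toNNReal := fun i =>
          (Real.toNNReal_mul (sq_nonneg _)).symm
        simp_rw [c1, c2]
        rw [← Real.toNNReal_sum_of_nonneg (fun i _ => by positivity),
          ← Real.toNNReal_sum_of_nonneg (fun i _ => by positivity),
          ← Real.toNNReal_add (by positivity) (by positivity)]
        congr 1
        rw [← Finset.sum_add_distrib, hSdef, Finset.sum_mul, Finset.sum_mul]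
        apply Finset.sum_congr rfl
        intro i _
        field_simp
      rw [e1]
  -- measurability of the accuracy event
  have hmeasS : MeasurableSet {p : Inp d × ℝ | Real.sign (pred w p.1) = p.2} := by
    have : {p : Inp d × ℝ | Real.sign (pred w p.1) = p.2}
        = (fun p : Inp d × ℝ => Real.sign (f p.1) - p.2) ⁻¹' {0} := by
      ext p
      simp only [Set.mem_setOf_eq, Set.mem_preimage, Set.mem_singleton_iff, sub_eq_zero, hsign]
    rw [this]
    exact ((C1C2Aux.measurable_rsign.comp (hfmeas.comp measurable_fst)).sub
      measurable_snd) (measurableSet_singleton 0)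
  -- compute the two conditional probabilities
  have hset1 : {x : Inp d | Real.sign (pred w x) = 1} = f ⁻¹' Set.Ioi 0 := by
    ext x
    simp only [Set.mem_setOf_eq, Set.mem_preimage, Set.mem_Ioi, hsign,
      C1C2Aux.sign_eq_one_iff]
  have hset2 : {x : Inp d | Real.sign (pred w x) = -1} = f ⁻¹' Set.Iio 0 := by
    ext x
    simp only [Set.mem_setOf_eq, Set.mem_preimage, Set.mem_Iio, hsign,
      C1C2Aux.sign_eq_neg_one_iff]
  set V : ℝ≥0 := (S * σ ^ 2 * (γ ^ 2 + 1 / γ)).toNNReal with hV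
  have hp1 : (condX2 d μ σ γ η 1) {x : Inp d | Real.sign (pred w x) = 1}
      = gaussianReal ((γ - 1) * S) V (Set.Ioi 0) := by
    rw [hset1, ← Measure.map_apply hfmeas measurableSet_Ioi, hlaw 1, one_mul]
  have hp2 : (condX2 d μ σ γ η (-1)) {x : Inp d | Real.sign (pred w x) = -1}
      = gaussianReal ((γ - 1) * S) V (Set.Ioi 0) := by
    rw [hset2, ← Measure.map_apply hfmeas measurableSet_Iio, hlaw (-1)]
    have : (-1 : ℝ) * (γ - 1) * S = -((γ - 1) * S) := by ring
    rw [this, C1C2Aux.neg_tail]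
  -- assemble the joint measure value
  have hAcc : AccP (Pc2 d μ σ γ η) w
      = (gaussianReal ((γ - 1) * S) V (Set.Ioi 0)).toReal := by
    rw [AccP, Pc2, jointOf]
    rw [Measure.add_apply, Measure.smul_apply, Measure.smul_apply]
    rw [Measure.prod_dirac, Measure.prod_dirac,
      Measure.map_apply (by fun_prop : Measurable fun x : Inp d => (x, (1:ℝ))) hmeasS,
      Measure.map_apply (by fun_prop : Measurable fun x : Inp d => (x, (-1:ℝ))) hmeasS]
    have e1 : ((fun x : Inp d => (x, (1:ℝ))) ⁻¹' {p : Inp d × ℝ | Real.sign (pred w p.1) = p.2})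
        = {x : Inp d | Real.sign (pred w x) = 1} := rfl
    have e2 : ((fun x : Inp d => (x, (-1:ℝ))) ⁻¹' {p : Inp d × ℝ | Real.sign (pred w p.1) = p.2})
        = {x : Inp d | Real.sign (pred w x) = -1} := rfl
    rw [e1, e2, hp1, hp2]
    simp only [smul_eq_mul]
    rw [← add_mul, ENNReal.inv_two_add_inv_two, one_mul]
  have hcoeV : ((V : ℝ≥0) : ℝ) = S * σ ^ 2 * (γ ^ 2 + 1 / γ) :=
    Real.coe_toNNReal _ hVpos.le
  have harg : -((γ - 1) * S / Real.sqrt (2 * V))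
      = -(vnorm μ / (Real.sqrt 2 * σ) * (γ - 1) / Real.sqrt (γ ^ 2 + 1 / γ)) := by
    rw [hcoeV]
    have hsq : Real.sqrt (2 * (S * σ ^ 2 * (γ ^ 2 + 1 / γ)))
        = Real.sqrt 2 * (vnorm μ * (σ * Real.sqrt (γ ^ 2 + 1 / γ))) := by
      rw [Real.sqrt_mul (by norm_num : (0:ℝ) ≤ 2),
        Real.sqrt_mul (by positivity : (0:ℝ) ≤ S * σ ^ 2),
        Real.sqrt_mul (le_of_lt hSpos), Real.sqrt_sq hσ.le]
      have hvS : vnorm μ = Real.sqrt S := rfl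
      rw [hvS]
      ring
    have hvv : vnorm μ * vnorm μ = S := Real.mul_self_sqrt hSpos.le
    have h2 : (0:ℝ) < Real.sqrt 2 := by positivity
    have hQ : (0:ℝ) < Real.sqrt (γ ^ 2 + 1 / γ) := Real.sqrt_pos.mpr hQpos
    rw [hsq, ← hvv, neg_inj]
    field_simp
  constructor
  · rw [hAcc, C1C2Aux.gauss_tail _ hVnn, harg]
  · intro hγ1
    rw [hAcc, C1C2Aux.gauss_tail _ hVnn, harg]
    have hargpos : 0 < -(vnorm μ / (Real.sqrt 2 * σ) * (γ - 1) / Real.sqrt (γ ^ 2 + 1 / γ)) := by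
      have hQ : (0:ℝ) < Real.sqrt (γ ^ 2 + 1 / γ) := Real.sqrt_pos.mpr hQpos
      have h2 : (0:ℝ) < Real.sqrt 2 := by positivity
      have hneg : vnorm μ / (Real.sqrt 2 * σ) * (γ - 1) / Real.sqrt (γ ^ 2 + 1 / γ) < 0 := by
        apply div_neg_of_neg_of_pos _ hQ
        apply mul_neg_of_pos_of_neg _ (by linarith)
        positivity
      linarith
    have := C1C2Aux.erfc_lt_one hargpos
    linarith
end

section
/- The predictor w** = (1/(‖μ‖₂·√(1+γ²)))·[μ, −γμ, 0_d] ∈ ℝ^{3d} satisfies Acc_{P_{c2}}(w**) = 0.5·erfc(−ρ1·√(1 + γ)). -/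
open MeasureTheory ProbabilityTheory Real Filter
open scoped ENNReal NNReal

section Aux

open Set

lemma pdf_conv_integral (m₁ m₂ y : ℝ) {v₁ v₂ : ℝ≥0} (h₁ : v₁ ≠ 0) (h₂ : v₂ ≠ 0) :
    ∫ x, gaussianPDFReal m₁ v₁ x * gaussianPDFReal (x + m₂) v₂ y
      = gaussianPDFReal (m₁ + m₂) (v₁ + v₂) y := by
  have hv₁ : (0:ℝ) < v₁ := lt_of_le_of_ne v₁.coe_nonneg (by exact_mod_cast (Ne.symm h₁))
  have hv₂ : (0:ℝ) < v₂ := lt_of_le_of_ne v₂.coe_nonneg (by exact_mod_cast (Ne.symm h₂))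
  set α : ℝ := ((v₁:ℝ) + v₂) / (2 * v₁ * v₂) with hα
  have hαpos : 0 < α := by positivity
  set s₀ : ℝ := (m₁ * v₂ + (y - m₂) * v₁) / ((v₁:ℝ) + v₂) with hs₀
  have hexp : ∀ x : ℝ, rexp (-(x - m₁)^2 / (2*v₁)) * rexp (-(y - (x+m₂))^2 / (2*v₂))
      = rexp (-(y-(m₁+m₂))^2 / (2*((v₁:ℝ)+v₂))) * rexp (-α * (x - s₀)^2) := by
    intro x
    rw [← Real.exp_add, ← Real.exp_add]
    congr 1
    rw [hα, hs₀]
    have hne : (v₁:ℝ) + v₂ ≠ 0 := by positivity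
    field_simp
    ring
  have key : ∀ x, gaussianPDFReal m₁ v₁ x * gaussianPDFReal (x + m₂) v₂ y
      = ((√(2*π*v₁))⁻¹ * (√(2*π*v₂))⁻¹ * rexp (-(y - (m₁+m₂))^2 / (2*((v₁:ℝ)+v₂))))
        * rexp (-α * (x - s₀)^2) := by
    intro x
    simp only [gaussianPDFReal]
    calc (√(2*π*v₁))⁻¹ * rexp (- (x - m₁)^2 / (2 * v₁)) *
          ((√(2*π*v₂))⁻¹ * rexp (- (y - (x + m₂))^2 / (2 * v₂)))
        = (√(2*π*v₁))⁻¹ * (√(2*π*v₂))⁻¹ *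
          (rexp (-(x - m₁)^2 / (2*v₁)) * rexp (-(y - (x+m₂))^2 / (2*v₂))) := by ring_nf
      _ = _ := by rw [hexp x]; ring
  rw [funext key, MeasureTheory.integral_const_mul]
  have hshift : ∫ x : ℝ, rexp (-α * (x - s₀)^2) = Real.sqrt (π/α) := by
    rw [← integral_gaussian α]
    exact integral_sub_right_eq_self (fun x => rexp (-α * x^2)) s₀
  rw [hshift]
  have hconst : (√(2*π*(v₁:ℝ)))⁻¹ * (√(2*π*(v₂:ℝ)))⁻¹ * Real.sqrt (π/α)
      = (√(2*π*((v₁:ℝ)+v₂)))⁻¹ := by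
    rw [← Real.sqrt_inv, ← Real.sqrt_inv, ← Real.sqrt_inv, ← Real.sqrt_mul (by positivity),
      ← Real.sqrt_mul (by positivity)]
    congr 1
    rw [hα]
    field_simp
  have : (↑(v₁ + v₂) : ℝ) = (v₁:ℝ) + v₂ := by push_cast; ring
  rw [gaussianPDFReal, this]
  rw [← hconst]
  ring

lemma gaussianPDFReal_le (m : ℝ) (v : ℝ≥0) (x : ℝ) :
    gaussianPDFReal m v x ≤ (√(2*π*v))⁻¹ := by
  rw [gaussianPDFReal]
  have h1 : rexp (- (x - m)^2 / (2 * v)) ≤ 1 := by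
    rw [Real.exp_le_one_iff]
    apply div_nonpos_of_nonpos_of_nonneg
    · simp [sq_nonneg]
    · positivity
  calc (√(2*π*v))⁻¹ * rexp (- (x - m)^2 / (2 * v)) ≤ (√(2*π*v))⁻¹ * 1 := by
        apply mul_le_mul_of_nonneg_left h1 (by positivity)
    _ = _ := mul_one _

lemma measurable_pdf2 (m₂ : ℝ) (v₂ : ℝ≥0) :
    Measurable (fun q : ℝ × ℝ => gaussianPDF (m₂ + q.1) v₂ q.2) := by
  apply Measurable.ennreal_ofReal
  unfold gaussianPDFReal
  fun_prop

lemma gaussianReal_conv (m₁ m₂ : ℝ) (v₁ v₂ : ℝ≥0) :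
    ((gaussianReal m₁ v₁).prod (gaussianReal m₂ v₂)).map (fun p : ℝ × ℝ => p.1 + p.2)
      = gaussianReal (m₁ + m₂) (v₁ + v₂) := by
  by_cases h₁ : v₁ = 0
  · subst h₁
    rw [gaussianReal_zero_var, Measure.dirac_prod,
      Measure.map_map measurable_add measurable_prodMk_left]
    rw [show ((fun p : ℝ × ℝ => p.1 + p.2) ∘ Prod.mk m₁) = (m₁ + ·) from rfl,
      gaussianReal_map_const_add, add_comm m₂ m₁, zero_add]
  by_cases h₂ : v₂ = 0
  · subst h₂
    rw [gaussianReal_zero_var, Measure.prod_dirac,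
      Measure.map_map measurable_add measurable_prodMk_right]
    rw [show ((fun p : ℝ × ℝ => p.1 + p.2) ∘ (fun x => (x, m₂))) = (· + m₂) from rfl,
      gaussianReal_map_add_const, add_zero]
  have h₁₂ : v₁ + v₂ ≠ 0 := by simp [h₁]
  ext s hs
  rw [Measure.map_apply measurable_add hs, Measure.prod_apply (measurable_add hs)]
  have h2 : ∀ x : ℝ, gaussianReal m₂ v₂ (Prod.mk x ⁻¹' ((fun p : ℝ × ℝ => p.1 + p.2) ⁻¹' s))
      = ∫⁻ y in s, gaussianPDF (m₂ + x) v₂ y := by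
    intro x
    have : (Prod.mk x ⁻¹' ((fun p : ℝ × ℝ => p.1 + p.2) ⁻¹' s)) = (fun y => x + y) ⁻¹' s := rfl
    rw [this, ← Measure.map_apply (measurable_const_add x) hs, gaussianReal_map_const_add,
      gaussianReal_apply _ h₂]
  simp_rw [h2]
  have hmeas : Measurable (fun x : ℝ => ∫⁻ y in s, gaussianPDF (m₂ + x) v₂ y) :=
    Measurable.lintegral_prod_right' (measurable_pdf2 m₂ v₂)
  rw [gaussianReal_of_var_ne_zero m₁ h₁,
    lintegral_withDensity_eq_lintegral_mul _ (measurable_gaussianPDF _ _) hmeas]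
  simp only [Pi.mul_apply]
  have hpull : ∀ x : ℝ, gaussianPDF m₁ v₁ x * ∫⁻ y in s, gaussianPDF (m₂ + x) v₂ y
      = ∫⁻ y in s, gaussianPDF m₁ v₁ x * gaussianPDF (m₂ + x) v₂ y := fun x =>
    (lintegral_const_mul _ (by apply Measurable.ennreal_ofReal; unfold gaussianPDFReal; fun_prop)).symm
  simp_rw [hpull]
  rw [lintegral_lintegral_swap]
  swap
  · exact Measurable.aemeasurable
      (((measurable_gaussianPDF m₁ v₁).comp measurable_fst).mul (measurable_pdf2 m₂ v₂))
  have hinner : ∀ y : ℝ, ∫⁻ x, gaussianPDF m₁ v₁ x * gaussianPDF (m₂ + x) v₂ y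
      = gaussianPDF (m₁ + m₂) (v₁ + v₂) y := by
    intro y
    have hint : Integrable (fun x => gaussianPDFReal m₁ v₁ x * gaussianPDFReal (m₂ + x) v₂ y) := by
      apply Integrable.mono' ((integrable_gaussianPDFReal m₁ v₁).const_mul ((√(2*π*v₂))⁻¹))
      · apply Continuous.aestronglyMeasurable
        unfold gaussianPDFReal; fun_prop
      · refine ae_of_all _ fun x => ?_
        rw [Real.norm_eq_abs, abs_of_nonneg
          (mul_nonneg (gaussianPDFReal_nonneg _ _ _) (gaussianPDFReal_nonneg _ _ _))]
        calc gaussianPDFReal m₁ v₁ x * gaussianPDFReal (m₂ + x) v₂ y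
            ≤ gaussianPDFReal m₁ v₁ x * (√(2*π*(v₂:ℝ)))⁻¹ :=
              mul_le_mul_of_nonneg_left (gaussianPDFReal_le _ _ _) (gaussianPDFReal_nonneg _ _ _)
          _ = (√(2*π*(v₂:ℝ)))⁻¹ * gaussianPDFReal m₁ v₁ x := by ring
    simp only [gaussianPDF]
    rw [lintegral_congr fun x =>
      (ENNReal.ofReal_mul (gaussianPDFReal_nonneg m₁ v₁ x)).symm,
      ← ofReal_integral_eq_lintegral_ofReal hint (ae_of_all _ fun x =>
        mul_nonneg (gaussianPDFReal_nonneg _ _ _) (gaussianPDFReal_nonneg _ _ _))]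
    congr 1
    simp_rw [add_comm m₂]
    exact pdf_conv_integral m₁ m₂ y h₁ h₂
  simp_rw [hinner]
  rw [← gaussianReal_apply _ h₁₂]

lemma map_sum_gauss : ∀ (n : ℕ) (a m : Fin n → ℝ) (v : Fin n → ℝ≥0),
    (Measure.pi fun i => gaussianReal (m i) (v i)).map (fun x => ∑ i, a i * x i)
      = gaussianReal (∑ i, a i * m i) (∑ i, Real.toNNReal ((a i)^2) * v i)
  | 0, a, m, v => by
    have h : (fun x : Fin 0 → ℝ => ∑ i, a i * x i) = fun _ => 0 := by
      funext x; simp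
    rw [h, Measure.map_const]
    simp
  | (n+1), a, m, v => by
    have hmp := measurePreserving_piFinSuccAbove (fun i : Fin (n+1) => gaussianReal (m i) (v i)) 0
    set e := MeasurableEquiv.piFinSuccAbove (fun _ : Fin (n+1) => ℝ) 0 with he
    have hg : Measurable (fun xt : Fin n → ℝ => ∑ j, a (Fin.succ j) * xt j) := by fun_prop
    have hF : Measurable (fun p : ℝ × (Fin n → ℝ) => a 0 * p.1 + ∑ j, a (Fin.succ j) * p.2 j) := by
      fun_prop
    have hsum : (fun x : Fin (n+1) → ℝ => ∑ i, a i * x i)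
        = (fun p : ℝ × (Fin n → ℝ) => a 0 * p.1 + ∑ j, a (Fin.succ j) * p.2 j) ∘ e := by
      funext x
      simp only [Function.comp_apply, he, MeasurableEquiv.piFinSuccAbove_apply]
      rw [Fin.sum_univ_succ]
      rfl
    rw [hsum, ← Measure.map_map hF e.measurable, hmp.map_eq]
    have hprodmap : ((gaussianReal (m 0) (v 0)).prod
          (Measure.pi fun j : Fin n => gaussianReal (m (Fin.succAbove 0 j)) (v (Fin.succAbove 0 j)))).map
          (fun p : ℝ × (Fin n → ℝ) => a 0 * p.1 + ∑ j, a (Fin.succ j) * p.2 j)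
        = (((gaussianReal (m 0) (v 0)).map (a 0 * ·)).prod
            ((Measure.pi fun j : Fin n => gaussianReal (m (Fin.succ j)) (v (Fin.succ j))).map
              (fun xt => ∑ j, a (Fin.succ j) * xt j))).map (fun p : ℝ × ℝ => p.1 + p.2) := by
      have hpi : (fun j : Fin n => gaussianReal (m (Fin.succAbove 0 j)) (v (Fin.succAbove 0 j)))
          = fun j => gaussianReal (m (Fin.succ j)) (v (Fin.succ j)) := by
        funext j; rw [Fin.zero_succAbove]
      rw [hpi, Measure.map_prod_map _ _ (by fun_prop) hg, Measure.map_map measurable_add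
        (Measurable.prodMap (by fun_prop) hg)]
      rfl
    rw [hprodmap, gaussianReal_map_const_mul,
      map_sum_gauss n (fun j => a (Fin.succ j)) (fun j => m (Fin.succ j)) (fun j => v (Fin.succ j)),
      gaussianReal_conv]
    congr 1
    · rw [Fin.sum_univ_succ]
    · rw [Fin.sum_univ_succ]
      congr 1
      ext
      simp [Real.toNNReal, max_eq_left (sq_nonneg (a 0))]

lemma integral_comp_add_right_Ioi (g : ℝ → ℝ) (a c : ℝ) :
    ∫ x in Set.Ioi a, g (x + c) = ∫ x in Set.Ioi (a + c), g x := by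
  have he : Measure.map (⇑(Homeomorph.addRight c).toMeasurableEquiv) volume = volume :=
    map_add_right_eq_self volume c
  calc ∫ x in Set.Ioi a, g (x + c)
      = ∫ x in (Homeomorph.addRight c).toMeasurableEquiv ⁻¹' (Set.Ioi (a + c)),
          g ((Homeomorph.addRight c).toMeasurableEquiv x) := by
        congr 1
        simp [Homeomorph.addRight, Set.preimage_add_const_Ioi]
    _ = ∫ x in Set.Ioi (a + c), g x ∂(Measure.map (⇑(Homeomorph.addRight c).toMeasurableEquiv) volume) :=
        (MeasureTheory.setIntegral_map_equiv _ g _).symm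
    _ = ∫ x in Set.Ioi (a + c), g x := by rw [he]

lemma gaussianReal_Ioi (m : ℝ) {v : ℝ≥0} (hv : v ≠ 0) :
    ((gaussianReal m v) (Set.Ioi 0)).toReal
      = 0.5 * erfc (-(m / Real.sqrt (2 * v))) := by
  have hvpos : (0:ℝ) < v := lt_of_le_of_ne v.coe_nonneg (by exact_mod_cast (Ne.symm hv))
  set s : ℝ := Real.sqrt (2 * v) with hsdef
  have hs : 0 < s := Real.sqrt_pos.mpr (by positivity)
  rw [gaussianReal_apply_eq_integral m hv,
    ENNReal.toReal_ofReal (integral_nonneg fun x => gaussianPDFReal_nonneg _ _ _)]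
  have hpdf : ∀ x : ℝ, gaussianPDFReal m v x = (√(2*π*v))⁻¹ * rexp (-(s⁻¹ * (x + -m))^2) := by
    intro x
    rw [gaussianPDFReal]
    congr 1
    rw [mul_pow, ← Real.sq_sqrt (show (0:ℝ) ≤ 2*v by positivity), ← hsdef]
    field_simp
    ring
  rw [MeasureTheory.setIntegral_congr_fun measurableSet_Ioi fun x _ => hpdf x,
    MeasureTheory.integral_const_mul,
    integral_comp_add_right_Ioi (fun t => rexp (-(s⁻¹ * t)^2)) 0 (-m), zero_add,
    integral_comp_mul_left_Ioi (fun t => rexp (-t^2)) (-m) (inv_pos.mpr hs)]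
  rw [erfc, smul_eq_mul, inv_inv]
  have harg : s⁻¹ * -m = -(m / s) := by field_simp
  rw [harg]
  have hconst : (√(2*π*(v:ℝ)))⁻¹ * s = (Real.sqrt π)⁻¹ := by
    rw [hsdef, ← Real.sqrt_inv, ← Real.sqrt_mul (by positivity), ← Real.sqrt_inv]
    congr 1
    field_simp
  rw [← mul_assoc, hconst]
  rw [show (0.5 : ℝ) * (2 / Real.sqrt π * ∫ t in Set.Ioi (-(m/s)), rexp (-t^2))
      = (Real.sqrt π)⁻¹ * ∫ t in Set.Ioi (-(m/s)), rexp (-t^2) by ring]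

instance gaussVec_prob (d : ℕ) (m : Vec d) (v : ℝ) : IsProbabilityMeasure (gaussVec d m v) := by
  unfold gaussVec; infer_instance

instance condX2_prob (d : ℕ) (μ : Vec d) (σ γ η y : ℝ) :
    IsProbabilityMeasure (condX2 d μ σ γ η y) := by
  unfold condX2; infer_instance

lemma sign_eq_one_iff' {r : ℝ} : Real.sign r = 1 ↔ 0 < r := by
  constructor
  · intro h
    rcases lt_trichotomy r 0 with hr|hr|hr
    · rw [Real.sign_of_neg hr] at h; norm_num at h
    · rw [hr, Real.sign_zero] at h; norm_num at h
    · exact hr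
  · exact Real.sign_of_pos

lemma sign_eq_neg_one_iff' {r : ℝ} : Real.sign r = -1 ↔ r < 0 := by
  constructor
  · intro h
    rcases lt_trichotomy r 0 with hr|hr|hr
    · exact hr
    · rw [hr, Real.sign_zero] at h; norm_num at h
    · rw [Real.sign_of_pos hr] at h; norm_num at h
  · exact Real.sign_of_neg

lemma measurable_sign' : Measurable Real.sign := by
  have h : Real.sign = fun r : ℝ => if r < 0 then (-1:ℝ) else if 0 < r then 1 else 0 := by
    funext r; rw [Real.sign]
  rw [h]
  exact Measurable.ite measurableSet_Iio measurable_const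
    (Measurable.ite measurableSet_Ioi measurable_const measurable_const)

lemma map_gaussVec_dot (d : ℕ) (a m : Vec d) {v : ℝ} (hv : 0 ≤ v) :
    (gaussVec d m v).map (fun x => dot a x)
      = gaussianReal (dot a m) (Real.toNNReal (v * ∑ i, a i ^ 2)) := by
  simp only [gaussVec, dot]
  rw [map_sum_gauss]
  congr 1
  apply NNReal.coe_injective
  rw [NNReal.coe_sum, Real.coe_toNNReal _ (by positivity), Finset.mul_sum]
  apply Finset.sum_congr rfl
  intro i _
  rw [NNReal.coe_mul, Real.coe_toNNReal _ (sq_nonneg _), Real.coe_toNNReal _ hv]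
  ring

lemma map_dotsum_prod (d : ℕ) (a b m₁ m₂ m₃ : Vec d) {v₁ v₂ v₃ : ℝ}
    (h₁ : 0 ≤ v₁) (h₂ : 0 ≤ v₂) :
    ((gaussVec d m₁ v₁).prod ((gaussVec d m₂ v₂).prod (gaussVec d m₃ v₃))).map
        (fun x : Inp d => dot a x.1 + dot b x.2.1)
      = gaussianReal (dot a m₁ + dot b m₂)
          (Real.toNNReal (v₁ * ∑ i, a i ^ 2) + Real.toNNReal (v₂ * ∑ i, b i ^ 2)) := by
  have hma : Measurable (fun x1 : Vec d => dot a x1) := by simp only [dot]; fun_prop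
  have hmb : Measurable (fun x2 : Vec d × Vec d => dot b x2.1) := by
    simp only [dot]; fun_prop
  have hcomp : (fun x : Inp d => dot a x.1 + dot b x.2.1)
      = (fun p : ℝ × ℝ => p.1 + p.2) ∘
        (Prod.map (fun x1 => dot a x1) (fun x2 : Vec d × Vec d => dot b x2.1)) := rfl
  rw [hcomp, ← Measure.map_map measurable_add (hma.prodMap hmb),
    ← Measure.map_prod_map _ _ hma hmb]
  have hfst : ((gaussVec d m₂ v₂).prod (gaussVec d m₃ v₃)).map
        (fun x2 : Vec d × Vec d => dot b x2.1)
      = (gaussVec d m₂ v₂).map (fun x => dot b x) := by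
    rw [show (fun x2 : Vec d × Vec d => dot b x2.1) = (fun x => dot b x) ∘ Prod.fst from rfl,
      ← Measure.map_map (by simp only [dot]; fun_prop) measurable_fst, Measure.map_fst_prod]
    simp
  rw [hfst, map_gaussVec_dot d a m₁ h₁, map_gaussVec_dot d b m₂ h₂, gaussianReal_conv]

lemma gaussianReal_neg_Iio (M : ℝ) (V : ℝ≥0) :
    gaussianReal (-M) V (Set.Iio 0) = gaussianReal M V (Set.Ioi 0) := by
  have h := gaussianReal_map_const_mul (μ := M) (v := V) (-1)
  have hone : (.mk ((-1:ℝ)^2) (sq_nonneg _) : ℝ≥0) = 1 := by ext; norm_num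
  rw [hone, one_mul] at h
  rw [show -M = (-1 : ℝ) * M by ring, ← h,
    Measure.map_apply (measurable_const_mul _) measurableSet_Iio]
  congr 1
  ext x
  simp only [Set.mem_preimage, Set.mem_Iio, Set.mem_Ioi]
  constructor <;> intro <;> linarith

end Aux

theorem c2_optimal_accuracy_on_c2 (d : ℕ) (hd : 1 ≤ d) (μ : Vec d) (hμ : μ ≠ 0)
    (σ γ η : ℝ) (hσ : 0 < σ) (hγ : 0 < γ) (hη : 0 < η) :
    AccP (Pc2 d μ σ γ η)
        ((1 / (vnorm μ * Real.sqrt (1 + γ ^ 2))) • ((μ, -γ • μ, (0 : Vec d)) : Inp d))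
      = 0.5 * erfc (-((vnorm μ / (Real.sqrt 2 * σ)) * Real.sqrt (1 + γ))) := by
  classical
  set S0 : ℝ := ∑ i, μ i ^ 2 with hS0def
  have hS0 : 0 < S0 := by
    obtain ⟨i, hi⟩ := Function.ne_iff.mp hμ
    exact Finset.sum_pos' (fun j _ => sq_nonneg _) ⟨i, Finset.mem_univ i, lt_of_le_of_ne (sq_nonneg _) (Ne.symm (pow_ne_zero 2 hi))⟩
  have hvn : vnorm μ = Real.sqrt S0 := rfl
  have hvnpos : 0 < vnorm μ := by rw [hvn]; positivity
  set c : ℝ := 1 / (vnorm μ * Real.sqrt (1 + γ ^ 2)) with hc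
  have hcpos : 0 < c := by rw [hc]; positivity
  set w : Inp d := c • ((μ, -γ • μ, (0 : Vec d)) : Inp d) with hw
  set a : Vec d := fun i => c * μ i with ha
  set b : Vec d := fun i => -(c * (γ * μ i)) with hb
  have hpred : (fun x : Inp d => pred w x) = fun x => dot a x.1 + dot b x.2.1 := by
    funext x
    simp only [pred, dot, hw, ha, hb, Prod.smul_fst, Prod.smul_snd, Pi.smul_apply,
      smul_eq_mul, Pi.neg_apply, mul_zero, zero_mul, smul_zero,
      Pi.zero_apply, Finset.sum_const_zero, add_zero]
    congr 1
    all_goals (apply Finset.sum_congr rfl; intro i _; ring)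
  have hpredm : Measurable (fun x : Inp d => pred w x) := by
    rw [hpred]; simp only [dot]; fun_prop
  set M : ℝ := c * (1 + γ) * S0 with hM
  set V : ℝ≥0 := Real.toNNReal (σ^2 * ∑ i, a i ^ 2) + Real.toNNReal (σ^2/γ * ∑ i, b i ^ 2)
    with hV
  have hsa : ∑ i, a i ^ 2 = c^2 * S0 := by
    rw [hS0def, Finset.mul_sum]; apply Finset.sum_congr rfl; intro i _; rw [ha]; ring
  have hsb : ∑ i, b i ^ 2 = c^2 * γ^2 * S0 := by
    rw [hS0def, Finset.mul_sum]; apply Finset.sum_congr rfl; intro i _; rw [hb]; ring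
  have hnn1 : 0 ≤ σ^2 * ∑ i, a i ^ 2 :=
    mul_nonneg (sq_nonneg σ) (Finset.sum_nonneg fun i _ => sq_nonneg _)
  have hnn2 : 0 ≤ σ^2/γ * ∑ i, b i ^ 2 :=
    mul_nonneg (div_nonneg (sq_nonneg σ) hγ.le) (Finset.sum_nonneg fun i _ => sq_nonneg _)
  have hVr : (V : ℝ) = σ^2 * c^2 * S0 * (1 + γ) := by
    rw [hV, NNReal.coe_add, Real.coe_toNNReal _ hnn1, Real.coe_toNNReal _ hnn2, hsa, hsb]
    field_simp
  have hVne : V ≠ 0 := by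
    intro h
    have h0 : (V : ℝ) = 0 := by rw [h]; simp
    rw [hVr] at h0
    have hp : 0 < σ^2 * c^2 * S0 * (1 + γ) :=
      mul_pos (mul_pos (mul_pos (pow_pos hσ 2) (pow_pos hcpos 2)) hS0) (by linarith)
    linarith
  have hlaw1 : (condX2 d μ σ γ η 1).map (fun x : Inp d => pred w x) = gaussianReal M V := by
    rw [hpred]
    unfold condX2
    rw [map_dotsum_prod d a b _ _ _ (sq_nonneg σ) (div_nonneg (sq_nonneg σ) hγ.le)]
    have hmean : dot a (fun i => μ i * 1) + dot b (fun i => -μ i * 1) = M := by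
      simp only [dot, ha, hb, hM, hS0def, mul_one]
      rw [← Finset.sum_add_distrib, Finset.mul_sum]
      apply Finset.sum_congr rfl; intro i _; ring
    rw [hmean]
  have hlaw2 : (condX2 d μ σ γ η (-1)).map (fun x : Inp d => pred w x)
      = gaussianReal (-M) V := by
    rw [hpred]
    unfold condX2
    rw [map_dotsum_prod d a b _ _ _ (sq_nonneg σ) (div_nonneg (sq_nonneg σ) hγ.le)]
    have hmean : dot a (fun i => μ i * -1) + dot b (fun i => -μ i * -1) = -M := by
      simp only [dot, ha, hb, hM, hS0def]
      rw [← Finset.sum_add_distrib, Finset.mul_sum, ← Finset.sum_neg_distrib]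
      apply Finset.sum_congr rfl; intro i _; ring
    rw [hmean]
  set T : Set (Inp d × ℝ) := {p | Real.sign (pred w p.1) = p.2} with hT
  have hTm : MeasurableSet T :=
    measurableSet_eq_fun (measurable_sign'.comp (hpredm.comp measurable_fst)) measurable_snd
  have h1 : ((condX2 d μ σ γ η 1).prod (Measure.dirac 1)) T
      = gaussianReal M V (Set.Ioi 0) := by
    rw [Measure.prod_dirac, Measure.map_apply measurable_prodMk_right hTm]
    have hpre : (fun x : Inp d => (x, (1:ℝ))) ⁻¹' T
        = (fun x : Inp d => pred w x) ⁻¹' Set.Ioi 0 := by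
      ext x
      simp only [Set.mem_preimage, hT, Set.mem_setOf_eq, Set.mem_Ioi]
      exact sign_eq_one_iff'
    rw [hpre, ← Measure.map_apply hpredm measurableSet_Ioi, hlaw1]
  have h2 : ((condX2 d μ σ γ η (-1)).prod (Measure.dirac (-1))) T
      = gaussianReal M V (Set.Ioi 0) := by
    rw [Measure.prod_dirac, Measure.map_apply measurable_prodMk_right hTm]
    have hpre : (fun x : Inp d => (x, (-1:ℝ))) ⁻¹' T
        = (fun x : Inp d => pred w x) ⁻¹' Set.Iio 0 := by
      ext x
      simp only [Set.mem_preimage, hT, Set.mem_setOf_eq, Set.mem_Iio]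
      exact sign_eq_neg_one_iff'
    rw [hpre, ← Measure.map_apply hpredm measurableSet_Iio, hlaw2, gaussianReal_neg_Iio]
  rw [AccP, Pc2, jointOf]
  rw [Measure.add_apply, Measure.smul_apply, Measure.smul_apply, smul_eq_mul, smul_eq_mul]
  rw [show ({p | Real.sign (pred w p.1) = p.2} : Set (Inp d × ℝ)) = T from rfl, h1, h2]
  rw [← add_mul, ENNReal.inv_two_add_inv_two, one_mul]
  rw [gaussianReal_Ioi M hVne]
  congr 2
  have h2V : Real.sqrt (2 * (V:ℝ)) = Real.sqrt 2 * σ * c * Real.sqrt S0 * Real.sqrt (1+γ) := by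
    rw [hVr, show 2 * (σ^2 * c^2 * S0 * (1+γ))
        = (Real.sqrt 2 * σ * c * Real.sqrt S0 * Real.sqrt (1+γ))^2 by
      have e1 : Real.sqrt 2 ^ 2 = 2 := Real.sq_sqrt (by norm_num)
      have e2 : Real.sqrt S0 ^ 2 = S0 := Real.sq_sqrt hS0.le
      have e3 : Real.sqrt (1+γ) ^ 2 = (1+γ) := Real.sq_sqrt (by positivity)
      rw [mul_pow, mul_pow, mul_pow, mul_pow, e1, e2, e3]
      ring]
    exact Real.sqrt_sq (by positivity)
  rw [h2V, hM, hvn]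
  have hsqS0 : Real.sqrt S0 ^ 2 = S0 := Real.sq_sqrt hS0.le
  have hsq1γ : Real.sqrt (1+γ) ^ 2 = (1+γ) := Real.sq_sqrt (by positivity)
  have h2pos : (0:ℝ) < Real.sqrt 2 := by positivity
  have hS0pos : (0:ℝ) < Real.sqrt S0 := by positivity
  have h1γpos : (0:ℝ) < Real.sqrt (1+γ) := by positivity
  have e2 : Real.sqrt S0 * Real.sqrt S0 = S0 := Real.mul_self_sqrt hS0.le
  have e3 : Real.sqrt (1+γ) * Real.sqrt (1+γ) = (1+γ) := Real.mul_self_sqrt (by positivity)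
  have key : c * (1 + γ) * S0 / (Real.sqrt 2 * σ * c * Real.sqrt S0 * Real.sqrt (1+γ))
      = Real.sqrt S0 / (Real.sqrt 2 * σ) * Real.sqrt (1+γ) := by
    rw [div_mul_eq_mul_div (Real.sqrt S0) (Real.sqrt 2 * σ) (Real.sqrt (1+γ)), div_eq_div_iff
      (mul_pos (mul_pos (mul_pos (mul_pos h2pos hσ) hcpos) hS0pos) h1γpos).ne' (mul_pos h2pos hσ).ne']
    linear_combination (-(Real.sqrt 2 * σ * c * (Real.sqrt (1+γ) * Real.sqrt (1+γ)))) * e2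
      - (Real.sqrt 2 * σ * c * S0) * e3
  rw [neg_inj]
  refine Eq.trans ?_ key
  rw [hc]
end
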